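/- Let k be a field, T a k-linear, Hom-finite pretriangulated (triangulated) category with an additive generator M, and set B = End_T(M). Then for every finitely presented (left) B-module X one has Ext^1_B(X, B) = 0. -/

import Mathlib

open CategoryTheory Limits Opposite

universe v u

/-- A zero object of `ModuleCat` has a subsingleton carrier. -/
lemma aux_subsingleton_of_isZero {R : Type*} [Ring R] {M : ModuleCat R}
    (h : IsZero M) : Subsingleton M := by
  constructor
  intro a b
  have h0 : (𝟙 M : M ⟶ M) = 0 := h.eq_of_src _ _
  have ha : a = (𝟙 M : M ⟶ M) a := rfl
  have hb : b = (𝟙 M : M ⟶ M) b := rfl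
  rw [h0] at ha hb
  rw [ha, hb]
  rfl

/-- `Ext¹(X, Y)` vanishes when `Y` is an injective module. -/
lemma aux_ext_one_subsingleton_of_injective {R : Type v} [Ring R]
    (X Y : ModuleCat.{v} R) (hY : Module.Injective R Y) :
    Subsingleton (((Ext ℤ (ModuleCat.{v} R) 1).obj (op X)).obj Y) := by
  let P : ProjectiveResolution X := (HasProjectiveResolution.out (Z := X)).some
  have hz : IsZero ((P.complex.linearYonedaObj ℤ Y).homology 1) := by
    rw [← HomologicalComplex.exactAt_iff_isZero_homology]
    rw [HomologicalComplex.exactAt_iff' _ 0 1 2 (by simp) (by simp)]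
    rw [ShortComplex.moduleCat_exact_iff]
    intro (x : P.complex.X 1 ⟶ Y) hx
    have hx' : P.complex.d 2 1 ≫ x = 0 := hx
    -- use exactness of the resolution at degree 1
    have hexact : (P.complex.sc' 2 1 0).Exact := by
      rw [← HomologicalComplex.exactAt_iff' _ 2 1 0 (by simp) (by simp)]
      exact P.complex_exactAt_succ 0
    rw [ShortComplex.moduleCat_exact_iff] at hexact
    set d10 : P.complex.X 1 →ₗ[R] P.complex.X 0 := (P.complex.d 1 0).hom
    have hker : ∀ z ∈ LinearMap.ker d10, x z = 0 := by
      intro z hz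
      obtain ⟨w, hw⟩ := hexact z hz
      have hw' : P.complex.d 2 1 w = z := hw
      calc x z = x (P.complex.d 2 1 w) := by rw [hw']
        _ = (P.complex.d 2 1 ≫ x) w := rfl
        _ = (0 : P.complex.X 2 ⟶ Y) w := by rw [hx']
        _ = 0 := rfl
    let q : (P.complex.X 1 ⧸ LinearMap.ker d10) →ₗ[R] Y :=
      Submodule.liftQ (LinearMap.ker d10) x.hom (fun z hz => hker z hz)
    let h0 : LinearMap.range d10 →ₗ[R] Y :=
      q.comp (d10.quotKerEquivRange.symm : LinearMap.range d10 →ₗ[R] _)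
    obtain ⟨e, he⟩ := hY.out (LinearMap.range d10).subtype
      (Submodule.injective_subtype _) h0
    refine ⟨ModuleCat.ofHom e, ?_⟩
    have key : P.complex.d 1 0 ≫ (ModuleCat.ofHom e : P.complex.X 0 ⟶ Y) = x := by
      apply ModuleCat.hom_ext
      apply LinearMap.ext
      intro z
      have h1 : (P.complex.d 1 0 ≫ (ModuleCat.ofHom e : P.complex.X 0 ⟶ Y)) z = e (d10 z) := rfl
      have h2 : d10 z = (LinearMap.range d10).subtype ⟨d10 z, LinearMap.mem_range_self _ z⟩ := rfl
      rw [h1, h2, he]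
      show q (d10.quotKerEquivRange.symm ⟨d10 z, _⟩) = x z
      rw [LinearMap.quotKerEquivRange_symm_apply_image]
      rfl
    exact key
  have e := P.isoExt (R := ℤ) 1 Y
  have hz' : IsZero (((Ext ℤ (ModuleCat.{v} R) 1).obj (op X)).obj Y) := hz.of_iso e
  exact aux_subsingleton_of_isZero hz'

/-- The main step in the proof of **Proposition 3.9**: if `T` is a `k`-linear, Hom-finite
(pre)triangulated category with an additive generator `M` and `B = End_T(M)`, then
`Ext¹_B(X, B) = 0` for every finitely presented (left) `B`-module `X`. -/
theorem ext_one_vanishes_over_endomorphism_algebra_of_additive_generator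
    (k : Type*) [Field k]
    (T : Type u) [Category.{v} T] [Preadditive T] [CategoryTheory.Linear k T]
    [HasZeroObject T] [HasShift T ℤ] [∀ n : ℤ, (shiftFunctor T n).Additive]
    [Pretriangulated T] [HasFiniteBiproducts T]
    (homFinite : ∀ X Y : T, FiniteDimensional k (X ⟶ Y))
    (M : T)
    (hgen : ∀ X : T, ∃ (n : ℕ) (s : X ⟶ biproduct (fun _ : Fin n => M))
      (r : biproduct (fun _ : Fin n => M) ⟶ X), s ≫ r = 𝟙 X)
    (X : ModuleCat.{v} (End M)) (hX : Module.FinitePresentation (End M) X) :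
    Subsingleton (((Ext ℤ (ModuleCat.{v} (End M)) 1).obj (op X)).obj
      (ModuleCat.of (End M) (End M))) := by
  classical
  -- `B := End M` is a finite-dimensional `k`-algebra, hence noetherian
  have hfd : FiniteDimensional k (End M) := homFinite M M
  have hnk : IsNoetherian k (End M) := inferInstance
  have hn : IsNoetherian (End M) (End M) := isNoetherian_of_tower k hnk
  -- Baer's criterion for `B` as a module over itself
  have baer : Module.Baer (End M) (End M) := by
    intro I φ
    obtain ⟨s, hs⟩ : I.FG := IsNoetherian.noetherian I
    set m := s.card with hm
    let e : {x // x ∈ s} ≃ Fin m := s.equivFin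
    let f : Fin m → End M := fun i => (e.symm i : End M)
    have hfI : ∀ i, f i ∈ I := fun i => by
      rw [← hs]; exact Submodule.subset_span (e.symm i).2
    let N := biproduct (fun _ : Fin m => M)
    let f' : M ⟶ N := biproduct.lift f
    let gvec : Fin m → End M := fun i => φ ⟨f i, hfI i⟩
    let g' : M ⟶ N := biproduct.lift gvec
    obtain ⟨Z, v, w, hT⟩ := Pretriangulated.distinguished_cocone_triangle f'
    have hfv : f' ≫ v = 0 := Pretriangulated.comp_distTriang_mor_zero₁₂ _ hT
    -- key: any `u : N ⟶ M` killed by `f'` is killed by `g'`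
    have key : ∀ u : N ⟶ M, f' ≫ u = 0 → g' ≫ u = 0 := by
      intro u hu
      have hdec : ∀ a : M ⟶ N,
          a ≫ u = ∑ i : Fin m, (a ≫ biproduct.π _ i) ≫ (biproduct.ι (fun _ : Fin m => M) i ≫ u) := by
        intro a
        conv_lhs => rw [← Category.comp_id a, ← biproduct.total]
        rw [Preadditive.comp_sum, Preadditive.sum_comp]
        simp [Category.assoc]
      have hf'dec := hdec f'
      have hg'dec := hdec g'
      simp only [f', g', biproduct.lift_π] at hf'dec hg'dec
      -- the element of `I` given by the relation
      set uvec : Fin m → End M := fun i => biproduct.ι (fun _ : Fin m => M) i ≫ u with huvec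
      have hrel : (∑ i : Fin m, uvec i • (⟨f i, hfI i⟩ : I)) = 0 := by
        apply Subtype.ext
        push_cast
        have : ∀ i : Fin m, uvec i • f i = f i ≫ uvec i := fun i => rfl
        simp only [this]
        rw [← hf'dec]
        exact hu
      have := congrArg φ hrel
      rw [map_sum, map_zero] at this
      simp only [map_smul] at this
      have hsm : ∀ i : Fin m, uvec i • φ (⟨f i, hfI i⟩ : I) = gvec i ≫ uvec i := fun i => rfl
      rw [hg'dec]
      simpa only [hsm] using this
    -- `g' ≫ v = 0` since `Z` is a direct summand of a power of `M`
    have hgv : g' ≫ v = 0 := by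
      obtain ⟨n, s', r, hsr⟩ := hgen Z
      have : g' ≫ v = ((g' ≫ v) ≫ s') ≫ r := by
        rw [Category.assoc, Category.assoc, hsr, Category.comp_id]
      rw [this]
      have hzero : (g' ≫ v) ≫ s' = 0 := by
        apply biproduct.hom_ext
        intro j
        rw [zero_comp, Category.assoc, Category.assoc]
        exact key (v ≫ s' ≫ biproduct.π _ j)
          (by rw [reassoc_of% hfv, zero_comp])
      rw [hzero, zero_comp]
    obtain ⟨h0, hh0⟩ := Pretriangulated.Triangle.coyoneda_exact₂ _ hT g' hgv
    let h : End M := h0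
    have hh : g' = h ≫ f' := hh0
    -- the extension is right multiplication by `h`
    refine ⟨LinearMap.toSpanSingleton (End M) (End M) h, ?_⟩
    have hgen' : ∀ i : Fin m, φ (⟨f i, hfI i⟩ : I) = f i • h := by
      intro i
      have : gvec i = g' ≫ biproduct.π (fun _ : Fin m => M) i := by
        rw [biproduct.lift_π]
      have h2 : g' ≫ biproduct.π (fun _ : Fin m => M) i = h ≫ f i := by
        rw [hh, Category.assoc, biproduct.lift_π]
      show gvec i = f i • h
      rw [this, h2]
      rfl
    suffices main : ∀ y, y ∈ Submodule.span (End M) (s : Set (End M)) →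
        ∀ (hyI : y ∈ I), LinearMap.toSpanSingleton (End M) (End M) h y = φ ⟨y, hyI⟩ by
      intro x hx
      exact main x (by rw [Ideal.submodule_span_eq, hs]; exact hx) hx
    intro y hy'
    induction hy' using Submodule.span_induction with
    | mem y hy =>
      intro hyI
      have hy2 : y = f (e ⟨y, hy⟩) := by simp [f]
      have heq : (⟨y, hyI⟩ : I) = ⟨f (e ⟨y, hy⟩), hfI _⟩ := Subtype.ext hy2
      rw [LinearMap.toSpanSingleton_apply]
      calc y • h = f (e ⟨y, hy⟩) • h := by rw [← hy2]
        _ = φ ⟨f (e ⟨y, hy⟩), hfI _⟩ := (hgen' _).symm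
        _ = φ ⟨y, hyI⟩ := by rw [← heq]
    | zero =>
      intro hyI
      rw [map_zero, show (⟨(0 : End M), hyI⟩ : I) = 0 from Subtype.ext rfl, map_zero]
    | add y z hy hz ihy ihz =>
      intro hyzI
      have hyI : y ∈ I := by rw [← hs]; exact hy
      have hzI : z ∈ I := by rw [← hs]; exact hz
      rw [map_add, show (⟨y + z, hyzI⟩ : I) = ⟨y, hyI⟩ + ⟨z, hzI⟩ from rfl, map_add,
        ihy hyI, ihz hzI]
    | smul b y hy ihy =>
      intro hbyI
      have hyI : y ∈ I := by rw [← hs]; exact hy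
      rw [map_smul, show (⟨b • y, hbyI⟩ : I) = b • ⟨y, hyI⟩ from rfl, map_smul, ihy hyI]
  have hinj : Module.Injective (End M) (End M) := baer.injective
  exact aux_ext_one_subsingleton_of_injective X (ModuleCat.of (End M) (End M)) hinj
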